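/- arXiv:2006.04701 — 7 statements merged into one kernel-verified Lean document; each statement's English description precedes it below -/
import Mathlib

section
/- Let b_1, …, b_n be a sequence of integers with b_1 = 1 and b_{i+1} ≤ b_1 + ⋯ + b_i for every i ∈ {1, …, n−1}. Then for every nonnegative integer a with a ≤ b_1 + ⋯ + b_n, there exists a subset S ⊆ {1, …, n} such that a = Σ_{i∈S} b_i. -/
/-- Lemma 2.2: if `b 1 = 1` and `b (i+1) ≤ b 1 + ⋯ + b i` for all `i ∈ [n-1]`,
then every nonnegative integer `a ≤ b 1 + ⋯ + b n` is a subset sum of the `b i`. -/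
theorem stmt_1 (n : ℕ) (hn : 1 ≤ n) (b : ℕ → ℤ) (hb1 : b 1 = 1)
    (hrec : ∀ i : ℕ, 1 ≤ i → i ≤ n - 1 → b (i + 1) ≤ ∑ j ∈ Finset.Icc 1 i, b j)
    (a : ℤ) (ha0 : 0 ≤ a) (ha : a ≤ ∑ i ∈ Finset.Icc 1 n, b i) :
    ∃ S ⊆ Finset.Icc 1 n, a = ∑ i ∈ S, b i := by
  induction n, hn using Nat.le_induction generalizing a with
  | base =>
    simp only [Finset.Icc_self, Finset.sum_singleton, hb1] at ha
    interval_cases a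
    · exact ⟨∅, by simp⟩
    · exact ⟨{1}, by simp [hb1]⟩
  | succ n hn ih =>
    have hsum : ∑ i ∈ Finset.Icc 1 (n + 1), b i
        = (∑ i ∈ Finset.Icc 1 n, b i) + b (n + 1) := by
      rw [← Finset.sum_Icc_succ_top (by omega)]
    have hrec' : ∀ i : ℕ, 1 ≤ i → i ≤ n - 1 →
        b (i + 1) ≤ ∑ j ∈ Finset.Icc 1 i, b j := by
      intro i h1 h2; exact hrec i h1 (by omega)
    have hbn : b (n + 1) ≤ ∑ j ∈ Finset.Icc 1 n, b j := hrec n hn (by omega)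
    by_cases hcase : a ≤ ∑ i ∈ Finset.Icc 1 n, b i
    · obtain ⟨S, hS, hSa⟩ := ih hrec' a ha0 hcase
      exact ⟨S, hS.trans (Finset.Icc_subset_Icc_right (by omega)), hSa⟩
    · push_neg at hcase
      obtain ⟨S, hS, hSa⟩ := ih hrec' (a - b (n + 1)) (by omega) (by omega)
      refine ⟨insert (n + 1) S, ?_, ?_⟩
      · intro x hx
        rcases Finset.mem_insert.mp hx with h | h
        · simp only [h, Finset.mem_Icc]; omega
        · exact Finset.Icc_subset_Icc_right (by omega) (hS h)
      · rw [Finset.sum_insert (fun h => by have := Finset.mem_Icc.mp (hS h); omega)]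
        omega
end

section
/- Let n ≥ 2 and let r_2, …, r_n ∈ {0,1}^n be linearly independent vectors such that the n×n matrix whose first row is e_1 (the first standard basis vector) and whose i-th row is r_i for 2 ≤ i ≤ n has determinant D = 1 or D = −1. Suppose v ∈ ℝ^n is orthogonal to each of r_2, …, r_n, v(1) = 1, and for some m ≤ n the entries satisfy 0 ≤ v(i+1) ≤ v(1) + ⋯ + v(i) for all i ∈ {1, …, m−1}. Then for every nonnegative integer a with a ≤ v(1) + ⋯ + v(m), there exists an n×n binary matrix whose determinant equals a. -/
open Matrix

lemma aux_binary_det_int {n : ℕ} (M : Matrix (Fin n) (Fin n) ℝ)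
    (h : ∀ i j, M i j = 0 ∨ M i j = 1) : ∃ k : ℤ, M.det = (k : ℝ) := by
  classical
  set N : Matrix (Fin n) (Fin n) ℤ := fun i j => if M i j = 1 then 1 else 0 with hN
  refine ⟨N.det, ?_⟩
  have hM : M = N.map (Int.cast : ℤ → ℝ) := by
    ext i j
    rcases h i j with h1 | h1 <;> simp [hN, Matrix.map, h1]
  rw [hM]
  simpa using (RingHom.map_det (Int.castRingHom ℝ) N).symm

lemma aux_prefix {n k : ℕ} (hk : k < n) (v : Fin n → ℝ) :
    (∑ j : Fin n, (if (j : ℕ) < k + 1 then v j else 0)) =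
      (∑ j : Fin n, (if (j : ℕ) < k then v j else 0)) + v ⟨k, hk⟩ := by
  have key : ∀ j : Fin n, (if (j : ℕ) < k + 1 then v j else 0) =
      (if (j : ℕ) < k then v j else 0) + (if j = ⟨k, hk⟩ then v j else 0) := by
    intro j
    by_cases h1 : j = ⟨k, hk⟩
    · subst h1; simp
    · have h2 : (j : ℕ) ≠ k := fun hc => h1 (Fin.ext hc)
      split_ifs with h3 h4 <;> simp_all <;> omega
  rw [Finset.sum_congr rfl (fun j _ => key j), Finset.sum_add_distrib,
    Finset.sum_ite_eq' Finset.univ (⟨k, hk⟩ : Fin n) v]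
  simp

lemma aux_greedy {n m : ℕ} (v : Fin n → ℝ) (hint : ∀ j, ∃ t : ℤ, v j = t)
    (hv0 : ∀ h0 : 0 < n, v ⟨0, h0⟩ = 1)
    (hle : ∀ k : ℕ, (hk : k < n) → 1 ≤ k → k + 1 ≤ m →
      v ⟨k, hk⟩ ≤ ∑ j : Fin n, (if (j : ℕ) < k then v j else 0)) :
    ∀ k : ℕ, k ≤ m → k ≤ n → ∀ a : ℤ, 0 ≤ a →
      (a : ℝ) ≤ ∑ j : Fin n, (if (j : ℕ) < k then v j else 0) →
      ∃ b : Fin n → ℝ, (∀ j, b j = 0 ∨ b j = 1) ∧ (∀ j : Fin n, k ≤ (j : ℕ) → b j = 0) ∧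
        ∑ j : Fin n, b j * v j = (a : ℝ) := by
  intro k
  induction k with
  | zero =>
    intro _ _ a ha0 ha
    simp only [Nat.not_lt_zero, if_false, Finset.sum_const_zero] at ha
    have : a = 0 := le_antisymm (by exact_mod_cast ha) ha0
    exact ⟨0, fun j => Or.inl rfl, fun j _ => rfl, by simp [this]⟩
  | succ k ih =>
    intro hkm hkn a ha0 ha
    have hk : k < n := hkn
    rw [aux_prefix hk v] at ha
    set S : ℝ := ∑ j : Fin n, (if (j : ℕ) < k then v j else 0) with hS
    by_cases hcase : (a : ℝ) ≤ S
    · obtain ⟨b, hb01, hb0, hbs⟩ := ih (by omega) (by omega) a ha0 hcase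
      exact ⟨b, hb01, fun j hj => hb0 j (by omega), hbs⟩
    · push_neg at hcase
      obtain ⟨t, ht⟩ := hint ⟨k, hk⟩
      have ht0 : 0 ≤ (a - t : ℤ) := by
        rcases Nat.eq_zero_or_pos k with hk0 | hk1
        ·
          have hv : v ⟨k, hk⟩ = 1 := by
            have := hv0 (by omega)
            simpa [show (⟨k, hk⟩ : Fin n) = ⟨0, by omega⟩ from Fin.ext hk0] using this
          have hts : t = 1 := by exact_mod_cast ht.symm.trans hv
          have hS0 : S = 0 := by
            simp [hS, hk0]
          have : (0 : ℝ) < (a : ℝ) := by rw [← hS0]; exact hcase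
          have : 0 < a := by exact_mod_cast this
          omega
        · have hvk : v ⟨k, hk⟩ ≤ S := hle k hk hk1 hkm
          have : (t : ℝ) < (a : ℝ) := by rw [← ht]; exact lt_of_le_of_lt hvk hcase
          have : t < a := by exact_mod_cast this
          omega
      have ht1 : ((a - t : ℤ) : ℝ) ≤ S := by
        push_cast
        rw [← ht]
        linarith
      obtain ⟨b, hb01, hb0, hbs⟩ := ih (by omega) (by omega) (a - t) ht0 ht1
      set i : Fin n := ⟨k, hk⟩ with hi
      refine ⟨Function.update b i 1, ?_, ?_, ?_⟩
      · intro j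
        by_cases hji : j = i
        · subst hji; simp
        · rw [Function.update_of_ne hji]; exact hb01 j
      · intro j hj
        have hji : j ≠ i := by
          intro hc
          rw [hc, hi] at hj
          exact Nat.not_succ_le_self k (by simpa using hj)
        rw [Function.update_of_ne hji]
        exact hb0 j (by omega)
      · have key : ∀ j : Fin n, Function.update b i 1 j * v j =
            b j * v j + (if j = i then v j else 0) := by
          intro j
          by_cases hji : j = i
          · subst hji
            rw [Function.update_self, hb0 i (le_refl _), if_pos rfl]
            ring
          · rw [Function.update_of_ne hji, if_neg hji, add_zero]
        rw [Finset.sum_congr rfl (fun j _ => key j), Finset.sum_add_distrib,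
          Finset.sum_ite_eq' Finset.univ i v, hbs]
        rw [ht]
        simp only [Finset.mem_univ, if_true]
        push_cast
        ring

/-- Lemma 2.3: let `A` be a real `n × n` matrix whose first row is `e₁` and whose
remaining rows `r₂, …, rₙ` are linearly independent `{0,1}`-vectors, with
`det A = ±1`.  If `v` is orthogonal to `r₂, …, rₙ`, `v 1 = 1`, and
`0 ≤ v (i+1) ≤ v 1 + ⋯ + v i` for `i ∈ [m-1]` (where `m ≤ n`), then every
nonnegative integer `a ≤ v 1 + ⋯ + v m` is the determinant of some `n × n`
binary matrix. -/
theorem stmt_2 (n : ℕ) (hn : 2 ≤ n) (A : Matrix (Fin n) (Fin n) ℝ)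
    (hA0 : A ⟨0, by omega⟩ = Pi.single ⟨0, by omega⟩ 1)
    (hA01 : ∀ i : Fin n, (i : ℕ) ≠ 0 → ∀ j : Fin n, A i j = 0 ∨ A i j = 1)
    (hli : LinearIndependent ℝ (fun i : {i : Fin n // (i : ℕ) ≠ 0} => A i.val))
    (hdet : A.det = 1 ∨ A.det = -1)
    (v : Fin n → ℝ)
    (horth : ∀ i : Fin n, (i : ℕ) ≠ 0 → ∑ j : Fin n, v j * A i j = 0)
    (hv1 : v ⟨0, by omega⟩ = 1)
    (m : ℕ) (hm : m ≤ n)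
    (hgrow : ∀ i : Fin n, 1 ≤ (i : ℕ) → (i : ℕ) ≤ m - 1 →
      0 ≤ v i ∧ v i ≤ ∑ j : Fin n, (if (j : ℕ) < (i : ℕ) then v j else 0))
    (a : ℤ) (ha0 : 0 ≤ a)
    (ha : (a : ℝ) ≤ ∑ j : Fin n, (if (j : ℕ) < m then v j else 0)) :
    ∃ B : Matrix (Fin n) (Fin n) ℝ,
      (∀ i j : Fin n, B i j = 0 ∨ B i j = 1) ∧ B.det = (a : ℝ) := by
  classical
  set z : Fin n := ⟨0, by omega⟩ with hz
  have hdetu : IsUnit A.det := by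
    rcases hdet with h | h <;> rw [h]
    · exact isUnit_one
    · exact isUnit_one.neg
  have hdd : A.det * A.det = 1 := by
    rcases hdet with h | h <;> rw [h] <;> norm_num
  -- A *ᵥ v = e₁
  have hAv : A *ᵥ v = Pi.single z 1 := by
    funext i
    by_cases hi : (i : ℕ) = 0
    · have hiz : i = z := Fin.ext hi
      subst hiz
      show A z ⬝ᵥ v = _
      rw [hA0, single_dotProduct]
      simp [hv1]
    · have hiz : i ≠ z := fun hc => hi (by rw [hc])
      show A i ⬝ᵥ v = _
      rw [Pi.single_eq_of_ne hiz]
      have := horth i hi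
      simp only [dotProduct]
      rw [← this]
      exact Finset.sum_congr rfl fun j _ => mul_comm _ _
  -- v is integer valued
  have hinj : Function.Injective (A.mulVec) := by
    intro x y hxy
    have h2 := congrArg (fun w => A⁻¹ *ᵥ w) hxy
    simpa [Matrix.mulVec_mulVec, Matrix.nonsing_inv_mul A hdetu] using h2
  have hcr : Matrix.cramer A (Pi.single z 1) = A.det • v := by
    apply hinj
    rw [Matrix.mulVec_cramer, Matrix.mulVec_smul, hAv]
  have hvd : ∀ j, v j = A.det * Matrix.cramer A (Pi.single z 1) j := by
    intro j
    have := congrFun hcr j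
    simp only [Pi.smul_apply, smul_eq_mul] at this
    rw [this, ← mul_assoc, hdd, one_mul]
  have hint : ∀ j, ∃ t : ℤ, v j = t := by
    intro j
    have hbin : ∀ i k, (A.updateCol j (Pi.single z 1)) i k = 0 ∨
        (A.updateCol j (Pi.single z 1)) i k = 1 := by
      intro i k
      rw [Matrix.updateCol_apply]
      by_cases hkj : k = j
      · rw [if_pos hkj]
        by_cases hiz : i = z
        · subst hiz; right; simp
        · left; exact Pi.single_eq_of_ne hiz 1
      · rw [if_neg hkj]
        by_cases hiz : i = z
        · subst hiz
          rw [hA0]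
          by_cases hkz : k = z
          · subst hkz; right; simp
          · left; exact Pi.single_eq_of_ne hkz 1
        · exact hA01 i (fun hc => hiz (Fin.ext hc)) k
    obtain ⟨t, htd⟩ := aux_binary_det_int _ hbin
    rcases hdet with h | h
    · exact ⟨t, by rw [hvd j, Matrix.cramer_apply, h, one_mul, htd]⟩
    · exact ⟨-t, by rw [hvd j, Matrix.cramer_apply, h, htd]; push_cast; ring⟩
  -- greedy subset sum
  have hle : ∀ k : ℕ, (hk : k < n) → 1 ≤ k → k + 1 ≤ m →
      v ⟨k, hk⟩ ≤ ∑ j : Fin n, (if (j : ℕ) < k then v j else 0) := by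
    intro k hk h1 h2
    exact (hgrow ⟨k, hk⟩ h1 (show k ≤ m - 1 by omega)).2
  obtain ⟨b, hb01, hbsupp, hbs⟩ :=
    aux_greedy v hint (fun h0 => hv1) hle m (le_refl m) hm a ha0 ha
  -- build the matrix
  set B0 : Matrix (Fin n) (Fin n) ℝ := A.updateRow z b with hB0
  set c : Fin n → ℝ := b ᵥ* A⁻¹ with hc
  have hcb : c ᵥ* A = b := by
    rw [hc, Matrix.vecMul_vecMul, Matrix.nonsing_inv_mul A hdetu, Matrix.vecMul_one]
  have hsum : b = ∑ k, c k • A k := by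
    funext j
    rw [← hcb]
    simp [Matrix.vecMul, dotProduct, Finset.sum_apply]
  have hdetB0 : B0.det = c z * A.det := by
    have h1 := Matrix.det_updateRow_sum A z c
    rw [← hsum] at h1
    simpa using h1
  have hcz : c z = (a : ℝ) := by
    have h1 : c ⬝ᵥ (A *ᵥ v) = (c ᵥ* A) ⬝ᵥ v := Matrix.dotProduct_mulVec c A v
    rw [hAv, hcb, dotProduct_single] at h1
    have h2 : b ⬝ᵥ v = (a : ℝ) := by
      rw [dotProduct, ← hbs]
    rw [h2] at h1
    linarith [h1]
  have hB0bin : ∀ i j : Fin n, B0 i j = 0 ∨ B0 i j = 1 := by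
    intro i j
    rw [hB0, Matrix.updateRow_apply]
    by_cases hiz : i = z
    · rw [if_pos hiz]; exact hb01 j
    · rw [if_neg hiz]; exact hA01 i (fun hc => hiz (Fin.ext hc)) j
  rcases hdet with h | h
  · exact ⟨B0, hB0bin, by rw [hdetB0, h, hcz, mul_one]⟩
  · set o : Fin n := ⟨1, by omega⟩ with ho
    have hzo : z ≠ o := by
      intro hc
      have := congrArg Fin.val hc
      simp [hz, ho] at this
    refine ⟨B0.submatrix id (Equiv.swap z o), fun i j => hB0bin _ _, ?_⟩
    rw [Matrix.det_permute' (Equiv.swap z o) B0, Equiv.Perm.sign_swap hzo, hdetB0, h, hcz]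
    push_cast
    ring
end

section
/- With k, n, M, and T as in the construction, every entry of the matrix product TM lies in {0,1}; that is, TM is a binary matrix. -/
/-- The rows `s_i` of the construction (1-indexed in both arguments):
`s 1 = e₁`; for `2 ≤ i ≤ n - k` the "recursive" rows have `s i i = -1`,
`s i j = 1` for `max 1 (i - k) ≤ j < i`, and `0` otherwise; for
`n - k + 1 ≤ i ≤ n` the "finishing" rows have `s i j = 1` iff `j = i` or
`i - k ≤ j ≤ n - k`. -/
def sRow (k n i j : ℕ) : ℤ :=
  if i = 1 then (if j = 1 then 1 else 0)
  else if i ≤ n - k then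
    (if j = i then -1 else if max 1 (i - k) ≤ j ∧ j < i then 1 else 0)
  else
    (if j = i ∨ (i - k ≤ j ∧ j ≤ n - k) then 1 else 0)

/-- The matrix `M` of the construction, whose `i`-th row is `s_i`
(converting from the 0-indexed `Fin n` to the 1-indexed description). -/
def Mmat (k n : ℕ) : Matrix (Fin n) (Fin n) ℤ :=
  fun i j => sRow k n ((i : ℕ) + 1) ((j : ℕ) + 1)

/-- The matrix `T` of the construction: `t 1 1 = 1`, `t i j = 1` when
`j ≥ i > 1` and `i ≡ j (mod k)`, and `t i j = 0` otherwise
(1-indexed description, realized on the 0-indexed `Fin n`). -/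
def Tmat (k n : ℕ) : Matrix (Fin n) (Fin n) ℤ :=
  fun i j =>
    if (i : ℕ) + 1 = 1 ∧ (j : ℕ) + 1 = 1 then 1
    else if ((j : ℕ) + 1 ≥ (i : ℕ) + 1 ∧ (i : ℕ) + 1 > 1) ∧
        ((i : ℕ) + 1) % k = ((j : ℕ) + 1) % k then 1
    else 0

lemma mod_gap {k a b : ℕ} (h : a % k = b % k) (hab : a < b) : a + k ≤ b := by
  have hd : k ∣ b - a := (Nat.modEq_iff_dvd' hab.le).mp h
  have := Nat.le_of_dvd (by omega) hd
  omega

/-- Lemma 3.1: every entry of `T * M` lies in `{0, 1}`, i.e. `T * M` is a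
binary matrix. -/
theorem stmt_3 (k n : ℕ) (hk : 2 ≤ k) (hn : 2 * k ≤ n) (i j : Fin n) :
    (Tmat k n * Mmat k n) i j = 0 ∨ (Tmat k n * Mmat k n) i j = 1 := by
  rw [Matrix.mul_apply]
  rcases Nat.eq_zero_or_pos (i : ℕ) with hi | hi
  · -- first row: T picks out l = i (= index 0)
    have hsum : ∑ l : Fin n, Tmat k n i l * Mmat k n l j = Mmat k n i j := by
      rw [Finset.sum_eq_single i]
      · simp [Tmat, hi]
      · intro l _ hl
        have hl0 : (l : ℕ) ≠ 0 := fun h0 => hl (Fin.ext (by omega))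
        simp only [Tmat]
        rw [if_neg (by omega), if_neg (by omega), zero_mul]
      · intro h; exact absurd (Finset.mem_univ i) h
    rw [hsum]
    simp only [Mmat, sRow, hi]
    split_ifs <;> simp
  · set P : Fin n → Prop := fun l => (i : ℕ) ≤ (l : ℕ) ∧
      ((i : ℕ) + 1) % k = ((l : ℕ) + 1) % k with hP
    set Pa : Fin n → Prop := fun l => P l ∧ ¬((l : ℕ) + 1 ≤ n - k) ∧
      ((j : ℕ) + 1 = (l : ℕ) + 1 ∨ ((l : ℕ) + 1 - k ≤ (j : ℕ) + 1 ∧ (j : ℕ) + 1 ≤ n - k)) with hPa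
    set Pb : Fin n → Prop := fun l => P l ∧ (l : ℕ) + 1 ≤ n - k ∧
      max 1 ((l : ℕ) + 1 - k) ≤ (j : ℕ) + 1 ∧ (j : ℕ) + 1 < (l : ℕ) + 1 with hPb
    set Pc : Fin n → Prop := fun l => P l ∧ (l : ℕ) + 1 ≤ n - k ∧ (j : ℕ) = (l : ℕ) with hPc
    have hpt : ∀ l : Fin n, Tmat k n i l * Mmat k n l j =
        (if Pa l then 1 else 0) + (if Pb l then 1 else 0) - (if Pc l then 1 else 0) := by
      intro l
      simp only [Tmat, Mmat, sRow, hP, hPa, hPb, hPc]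
      split_ifs <;> omega
    rw [Finset.sum_congr rfl (fun l _ => hpt l)]
    rw [Finset.sum_sub_distrib, Finset.sum_add_distrib]
    rw [Finset.sum_boole, Finset.sum_boole, Finset.sum_boole]
    set Sa := (Finset.univ.filter Pa).card with hSa
    set Sb := (Finset.univ.filter Pb).card with hSb
    set Sc := (Finset.univ.filter Pc).card with hSc
    have hres : ∀ l l' : Fin n, P l → P l' → ((l:ℕ)+1) % k = ((l':ℕ)+1) % k := by
      intro l l' h1 h2
      simp only [hP] at h1 h2
      omega
    have ha1 : Sa ≤ 1 := by
      apply Finset.card_le_one.mpr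
      intro a ha b hb
      simp only [Finset.mem_filter, Finset.mem_univ, true_and, hPa] at ha hb
      rcases Nat.lt_trichotomy (a : ℕ) (b : ℕ) with hlt | heq | hlt
      · have := mod_gap (hres a b ha.1 hb.1) (by omega); have := b.isLt; omega
      · exact Fin.ext heq
      · have := mod_gap (hres b a hb.1 ha.1) (by omega); have := a.isLt; omega
    have hb1 : Sb ≤ 1 := by
      apply Finset.card_le_one.mpr
      intro a ha b hb
      simp only [Finset.mem_filter, Finset.mem_univ, true_and, hPb] at ha hb
      rcases Nat.lt_trichotomy (a : ℕ) (b : ℕ) with hlt | heq | hlt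
      · have := mod_gap (hres a b ha.1 hb.1) (by omega); omega
      · exact Fin.ext heq
      · have := mod_gap (hres b a hb.1 ha.1) (by omega); omega
    have hc1 : Sc ≤ 1 := by
      apply Finset.card_le_one.mpr
      intro a ha b hb
      simp only [Finset.mem_filter, Finset.mem_univ, true_and, hPc] at ha hb
      exact Fin.ext (by omega)
    have claim2 : 1 ≤ Sb → Sa = 0 := by
      intro hSb1
      obtain ⟨l, hl⟩ := Finset.card_pos.mp (by omega : 0 < (Finset.univ.filter Pb).card)
      simp only [Finset.mem_filter, Finset.mem_univ, true_and, hPb] at hl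
      apply Finset.card_eq_zero.mpr
      apply Finset.filter_eq_empty_iff.mpr
      intro l' _
      simp only [hPa]
      intro hl'
      have hgt : (l : ℕ) + 1 < (l' : ℕ) + 1 := by omega
      have := mod_gap (hres l l' hl.1 hl'.1) hgt
      have hmax := hl.2.2.1
      omega
    have claim1 : 1 ≤ Sc → 1 ≤ Sa + Sb := by
      intro hSc1
      obtain ⟨l, hl⟩ := Finset.card_pos.mp (by omega : 0 < (Finset.univ.filter Pc).card)
      simp only [Finset.mem_filter, Finset.mem_univ, true_and, hPc] at hl
      have hiP : (i : ℕ) ≤ (l : ℕ) ∧ ((i : ℕ) + 1) % k = ((l : ℕ) + 1) % k := hl.1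
      have hjl : (j : ℕ) = (l : ℕ) := hl.2.2
      have hjlt : (j : ℕ) + k < n := by omega
      have hl0v : ((⟨(j : ℕ) + k, hjlt⟩ : Fin n) : ℕ) = (j : ℕ) + k := rfl
      have hresl0 : ((i : ℕ) + 1) % k = (((⟨(j : ℕ) + k, hjlt⟩ : Fin n) : ℕ) + 1) % k := by
        have hmod : ((j : ℕ) + k + 1) % k = ((j : ℕ) + 1) % k := by
          rw [show (j : ℕ) + k + 1 = ((j : ℕ) + 1) + k by ring]
          exact Nat.add_mod_right _ _
        have h2 : ((i : ℕ) + 1) % k = ((j : ℕ) + 1) % k := by rw [hjl]; exact hiP.2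
        rw [hl0v, hmod, h2]
      have hPl0 : P (⟨(j : ℕ) + k, hjlt⟩ : Fin n) := ⟨by rw [hl0v]; omega, hresl0⟩
      by_cases hrec : (j : ℕ) + k + 1 ≤ n - k
      · have hmem : (⟨(j : ℕ) + k, hjlt⟩ : Fin n) ∈ Finset.univ.filter Pb := by
          simp only [Finset.mem_filter, Finset.mem_univ, true_and, hPb, hl0v]
          exact ⟨hPl0, hrec, by omega, by omega⟩
        have := Finset.card_pos.mpr ⟨_, hmem⟩
        omega
      · have hmem : (⟨(j : ℕ) + k, hjlt⟩ : Fin n) ∈ Finset.univ.filter Pa := by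
          simp only [Finset.mem_filter, Finset.mem_univ, true_and, hPa, hl0v]
          exact ⟨hPl0, by omega, Or.inr ⟨by omega, by omega⟩⟩
        have := Finset.card_pos.mpr ⟨_, hmem⟩
        omega
    omega
end

section
/- With k, n, M, and T as in the construction, det(TM) = 1 or det(TM) = −1. -/
lemma Tmat_upper (k n : ℕ) : (Tmat k n).BlockTriangular id := by
  intro i j hij
  simp only [id_eq] at hij
  have hji : (j : ℕ) < (i : ℕ) := hij
  simp only [Tmat]
  rw [if_neg, if_neg]
  · rintro ⟨⟨h1, -⟩, -⟩; omega
  · rintro ⟨h1, h2⟩; omega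

lemma Tmat_diag (k n : ℕ) (i : Fin n) : Tmat k n i i = 1 := by
  simp only [Tmat]
  by_cases h : (i : ℕ) = 0
  · simp [h]
  · rw [if_neg (by omega)]
    simp [show (0:ℕ) < (i:ℕ) by omega]

lemma Tmat_det (k n : ℕ) : (Tmat k n).det = 1 := by
  rw [Matrix.det_of_upperTriangular (Tmat_upper k n)]
  simp [Tmat_diag]

lemma Mmat_lower (k n : ℕ) : (Mmat k n).BlockTriangular OrderDual.toDual := by
  intro i j hij
  have hji : (i : ℕ) < (j : ℕ) := by
    simpa using hij
  simp only [Mmat, sRow]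
  by_cases h0 : (i : ℕ) + 1 = 1
  · rw [if_pos h0, if_neg (by omega)]
  rw [if_neg h0]
  by_cases h : (i : ℕ) + 1 ≤ n - k
  · rw [if_pos h, if_neg (by omega), if_neg (by push_neg; intro; omega)]
  · rw [if_neg h, if_neg]
    push_neg
    exact ⟨by omega, fun h1 => by omega⟩

lemma Mmat_diag (k n : ℕ) (i : Fin n) :
    Mmat k n i i = 1 ∨ Mmat k n i i = -1 := by
  simp only [Mmat, sRow]
  by_cases h1 : (i : ℕ) + 1 = 1
  · left; rw [if_pos h1, if_pos h1]
  · rw [if_neg h1]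
    by_cases h2 : (i : ℕ) + 1 ≤ n - k
    · right; rw [if_pos h2]; simp
    · left; rw [if_neg h2]; simp

/-- `det (T * M) = ±1` for the matrices of the construction. -/
theorem stmt_5 (k n : ℕ) (hk : 2 ≤ k) (hn : 2 * k ≤ n) :
    (Tmat k n * Mmat k n).det = 1 ∨ (Tmat k n * Mmat k n).det = -1 := by
  rw [← Int.isUnit_iff, Matrix.det_mul, Tmat_det, one_mul,
    Matrix.det_of_lowerTriangular _ (Mmat_lower k n)]
  refine Finset.prod_induction _ IsUnit (fun _ _ => IsUnit.mul) isUnit_one fun i _ => ?_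
  rcases Mmat_diag k n i with h | h <;> rw [h] <;> simp
end

section
/- With k, n, M, and T as in the construction, define v ∈ ℝ^n by v(j) = F_k(j) for 1 ≤ j ≤ n−k and v(i) = −Σ_{j=i−k}^{n−k} F_k(j) for n−k+1 ≤ i ≤ n. Then v is orthogonal to each of s_2, …, s_n. -/
/-- The `k`-step Fibonacci numbers: `F k j = 0` for `j ≤ 0` (realized on `ℕ` by
`F k 0 = 0`, with out-of-range terms of the window sum truncating to index `0`),
`F k 1 = 1`, and `F k j = Σ_{jp = j - k}^{j - 1} F k jp` for `j ≥ 2`. -/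
def F (k : ℕ) : ℕ → ℤ
  | 0 => 0
  | 1 => 1
  | (j + 2) => ∑ i ∈ Finset.range k, F k (j + 1 - i)
  decreasing_by exact Nat.lt_succ_of_le (Nat.sub_le _ _)

lemma F_zero (k : ℕ) : F k 0 = 0 := by simp [F]

lemma Fwin (k : ℕ) : ∀ t m : ℕ, ∑ i ∈ Finset.range t, F k (m - i)
    = ∑ j ∈ Finset.Icc (m + 1 - t) m, F k j := by
  intro t
  induction t with
  | zero => intro m; simp
  | succ t ih =>
    intro m
    rw [Finset.sum_range_succ, ih]
    rcases Nat.lt_or_ge m (t + 1) with h | h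
    · -- t ≥ m, so m - t = 0
      have h0 : m - t = 0 := by omega
      rw [h0, F_zero, add_zero]
      rcases Nat.lt_or_ge m t with h2 | h2
      · have : m + 1 - t = 0 := by omega
        have : m + 1 - t = m + 1 - (t + 1) := by omega
        rw [this]
      · -- t = m
        have ht : t = m := by omega
        have h1 : m + 1 - (t + 1) = 0 := by omega
        have h2' : m + 1 - t = 1 := by omega
        rw [h1, h2']
        have hset : Finset.Icc 0 m = insert 0 (Finset.Icc 1 m) := by
          ext x; simp [Finset.mem_Icc]; omega
        rw [hset, Finset.sum_insert (by simp), F_zero, zero_add]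
    · have h1 : m + 1 - (t + 1) = m - t := by omega
      rw [h1]
      have hset : Finset.Icc (m - t) m = insert (m - t) (Finset.Icc (m + 1 - t) m) := by
        ext x; simp [Finset.mem_Icc]; omega
      rw [hset, Finset.sum_insert (by simp [Finset.mem_Icc]; omega), add_comm]

lemma FIcc (k m : ℕ) (hm : 2 ≤ m) :
    F k m = ∑ j ∈ Finset.Icc (m - k) (m - 1), F k j := by
  obtain ⟨j, rfl⟩ : ∃ j, m = j + 2 := ⟨m - 2, by omega⟩
  rw [show F k (j + 2) = ∑ i ∈ Finset.range k, F k (j + 1 - i) from by rw [F], Fwin]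
  congr 1

lemma drop_zero (k b : ℕ) :
    ∑ j ∈ Finset.Icc 0 b, F k j = ∑ j ∈ Finset.Icc 1 b, F k j := by
  have hset : Finset.Icc 0 b = insert 0 (Finset.Icc 1 b) := by
    ext x; simp [Finset.mem_Icc]; omega
  rw [hset, Finset.sum_insert (by simp), F_zero, zero_add]

/-- Theorem 3.3 (first part): the vector `v` defined by `v j = F k j` for
`1 ≤ j ≤ n - k` and `v i = -Σ_{j = i - k}^{n - k} F k j` for
`n - k + 1 ≤ i ≤ n` is orthogonal to each of `s_2, …, s_n`. -/
theorem stmt_6 (k n : ℕ) (hk : 2 ≤ k) (hn : 2 * k ≤ n) (v : Fin n → ℝ)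
    (hv : ∀ j : Fin n, v j =
      if (j : ℕ) + 1 ≤ n - k then (F k ((j : ℕ) + 1) : ℝ)
      else -(∑ j' ∈ Finset.Icc ((j : ℕ) + 1 - k) (n - k), (F k j' : ℝ))) :
    ∀ i : Fin n, (i : ℕ) ≠ 0 →
      ∑ j : Fin n, v j * ((Mmat k n) i j : ℝ) = 0 := by
  intro i hi
  set g : ℕ → ℝ := fun j => if j ≤ n - k then (F k j : ℝ)
    else -(∑ j' ∈ Finset.Icc (j - k) (n - k), (F k j' : ℝ)) with hg
  set m : ℕ := (i : ℕ) + 1 with hmdef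
  have hm2 : 2 ≤ m := by omega
  have hmn : m ≤ n := by have := i.isLt; omega
  have step1 : ∑ j : Fin n, v j * ((Mmat k n) i j : ℝ)
      = ∑ j ∈ Finset.Icc 1 n, g j * (sRow k n m j : ℝ) := by
    have e1 : ∀ j : Fin n, v j * ((Mmat k n) i j : ℝ)
        = g ((j : ℕ) + 1) * (sRow k n m ((j : ℕ) + 1) : ℝ) := by
      intro j; rw [hv j]; rfl
    rw [Finset.sum_congr rfl (fun j _ => e1 j),
      Fin.sum_univ_eq_sum_range (fun j => g (j + 1) * (sRow k n m (j + 1) : ℝ)),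
      show Finset.Icc 1 n = Finset.Ico 1 (n + 1) from by rw [Finset.Ico_add_one_right_eq_Icc],
      Finset.sum_Ico_eq_sum_range]
    simp [add_comm]
  rw [step1]
  rcases le_or_gt m (n - k) with hA | hB
  · -- recursive row
    have hrow : ∀ j, (sRow k n m j : ℝ)
        = (if j ∈ Finset.Icc (max 1 (m - k)) (m - 1) then (1 : ℝ) else 0)
          - (if j = m then 1 else 0) := by
      intro j
      simp only [sRow, if_neg (by omega : ¬ m = 1), if_pos hA, Finset.mem_Icc, sup_le_iff]
      split_ifs <;> push_cast <;> first | ring1 | (exfalso; omega)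
    have hWsub : Finset.Icc (max 1 (m - k)) (m - 1) ⊆ Finset.Icc 1 n := by
      intro x hx; simp [Finset.mem_Icc] at hx ⊢; omega
    calc ∑ j ∈ Finset.Icc 1 n, g j * (sRow k n m j : ℝ)
        = ∑ j ∈ Finset.Icc 1 n,
            ((if j ∈ Finset.Icc (max 1 (m - k)) (m - 1) then g j else 0)
              - (if j = m then g j else 0)) := by
          apply Finset.sum_congr rfl; intro j _
          rw [hrow j]; split_ifs <;> ring
      _ = (∑ j ∈ Finset.Icc (max 1 (m - k)) (m - 1), g j) - g m := by
          rw [Finset.sum_sub_distrib, Finset.sum_ite_mem,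
            Finset.inter_eq_right.mpr hWsub, Finset.sum_ite_eq',
            if_pos (by simp [Finset.mem_Icc]; omega : m ∈ Finset.Icc 1 n)]
      _ = 0 := by
          have hgW : ∀ j ∈ Finset.Icc (max 1 (m - k)) (m - 1), g j = (F k j : ℝ) := by
            intro j hj; simp [Finset.mem_Icc] at hj
            simp only [hg]; rw [if_pos (by omega)]
          rw [Finset.sum_congr rfl hgW]
          simp only [hg]; rw [if_pos hA]
          rw [← Int.cast_sum]
          have : ∑ j ∈ Finset.Icc (max 1 (m - k)) (m - 1), F k j = F k m := by
            rw [FIcc k m hm2]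
            rcases Nat.eq_zero_or_pos (m - k) with h0 | h0
            · rw [h0, show max 1 0 = 1 from rfl, ← drop_zero]
            · rw [max_eq_right (by omega : 1 ≤ m - k)]
          rw [this]; simp
  · -- finishing row
    have hrow : ∀ j, (sRow k n m j : ℝ)
        = (if j = m then (1 : ℝ) else 0)
          + (if j ∈ Finset.Icc (m - k) (n - k) then 1 else 0) := by
      intro j
      simp only [sRow, if_neg (by omega : ¬ m = 1), if_neg (by omega : ¬ m ≤ n - k),
        Finset.mem_Icc, sup_le_iff]
      split_ifs <;> push_cast <;> first | ring1 | (exfalso; omega)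
    have hWsub : Finset.Icc (m - k) (n - k) ⊆ Finset.Icc 1 n := by
      intro x hx; simp [Finset.mem_Icc] at hx ⊢; omega
    calc ∑ j ∈ Finset.Icc 1 n, g j * (sRow k n m j : ℝ)
        = ∑ j ∈ Finset.Icc 1 n,
            ((if j = m then g j else 0)
              + (if j ∈ Finset.Icc (m - k) (n - k) then g j else 0)) := by
          apply Finset.sum_congr rfl; intro j _
          rw [hrow j]; split_ifs <;> ring
      _ = g m + ∑ j ∈ Finset.Icc (m - k) (n - k), g j := by
          rw [Finset.sum_add_distrib, Finset.sum_ite_mem,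
            Finset.inter_eq_right.mpr hWsub, Finset.sum_ite_eq',
            if_pos (by simp [Finset.mem_Icc]; omega : m ∈ Finset.Icc 1 n)]
      _ = 0 := by
          have hgW : ∀ j ∈ Finset.Icc (m - k) (n - k), g j = (F k j : ℝ) := by
            intro j hj; simp [Finset.mem_Icc] at hj
            simp only [hg]; rw [if_pos (by omega)]
          rw [Finset.sum_congr rfl hgW]
          simp only [hg]; rw [if_neg (by omega)]
          ring
end

section
/- For every integer k ≥ 2, the function f(z) = z − 2 + z^{−k} has exactly one zero (counted with multiplicity) in the closed disk {z ∈ ℂ : |z − 2| ≤ 2^{1−k}}; equivalently, the polynomial z^{k+1} − 2z^k + 1 has exactly one root in that disk. -/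
open Polynomial

private lemma aux_two_mul (k : ℕ) (hk : 2 ≤ k) : 2 * k ≤ 2 ^ k := by
  induction k, hk using Nat.le_induction with
  | base => norm_num
  | succ n hn ih =>
    have h2 : 2 ≤ 2 ^ n := le_trans (by omega) ih
    have h3 : 2 ^ (n + 1) = 2 ^ n + 2 ^ n := by ring
    omega

private lemma aux_succ_lt (k : ℕ) (hk : 2 ≤ k) : k + 1 < 2 ^ k := by
  induction k, hk using Nat.le_induction with
  | base => norm_num
  | succ n hn ih =>
    have h2 : 2 ≤ 2 ^ n := Nat.one_lt_two_pow_iff.mpr (by omega)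
    have h3 : 2 ^ (n + 1) = 2 ^ n + 2 ^ n := by ring
    omega

private lemma aux_two_mul_lt (k : ℕ) (hk : 3 ≤ k) : 2 * k < 2 ^ k := by
  induction k, hk using Nat.le_induction with
  | base => norm_num
  | succ n hn ih =>
    have h2 : 2 ≤ 2 ^ n := Nat.one_lt_two_pow_iff.mpr (by omega)
    have h3 : 2 ^ (n + 1) = 2 ^ n + 2 ^ n := by ring
    omega

private lemma aux_four (k : ℕ) (hk : 4 ≤ k) : 4 * k ≤ 2 ^ k := by
  induction k, hk using Nat.le_induction with
  | base => norm_num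
  | succ n hn ih =>
    have h2 : 4 ≤ 2 ^ n := by omega
    have h3 : 2 ^ (n + 1) = 2 ^ n + 2 ^ n := by ring
    omega

private lemma two_pow_pos' (k : ℕ) : (0:ℝ) < 2 ^ k := by positivity

private lemma exist_ineq (k : ℕ) (hk : 2 ≤ k) :
    1 < (2 - 2 / 2 ^ k : ℝ) ^ k * (2 / 2 ^ k) := by
  rcases eq_or_lt_of_le hk with h2 | h3
  · rw [← h2]; norm_num
  · -- k ≥ 3
    have h2k := two_pow_pos' k
    set u : ℝ := ((2:ℝ) ^ k)⁻¹ with hu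
    have hu0 : 0 < u := by positivity
    have hcancel : (2:ℝ) ^ k * u = 1 := mul_inv_cancel₀ (ne_of_gt h2k)
    have hku : (k:ℝ) * u < 1 / 2 := by
      have hnat : (2 * (k:ℝ)) < 2 ^ k := by exact_mod_cast aux_two_mul_lt k h3
      nlinarith [mul_lt_mul_of_pos_right hnat hu0]
    have h1le : (1:ℝ) ≤ 2 ^ k := one_le_pow₀ (by norm_num)
    have hu1 : u ≤ 1 := by nlinarith [mul_le_mul_of_nonneg_left h1le hu0.le]
    have hb : 1 - (k:ℝ) * u ≤ (1 - u) ^ k := by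
      have h := one_add_mul_le_pow (a := -u) (by nlinarith) k
      rw [show (1:ℝ) + -u = 1 - u by ring] at h
      linarith
    have hdiv : (2:ℝ) / 2 ^ k = 2 * u := by rw [div_eq_mul_inv]
    rw [hdiv, show (2:ℝ) - 2 * u = 2 * (1 - u) by ring, mul_pow]
    calc (1:ℝ) < 2 * (1 - u) ^ k := by nlinarith
    _ = 2 ^ k * (1 - u) ^ k * (2 * u) := by
        rw [show (2:ℝ) ^ k * (1 - u) ^ k * (2 * u) = 2 * (1 - u) ^ k * (2 ^ k * u) by ring,
          hcancel, mul_one]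

private lemma key_ineq (k : ℕ) (hk : 2 ≤ k) :
    (k : ℝ) * (2 + 2 / 2 ^ k) ^ (k - 1) < (2 - 2 / 2 ^ k) ^ (2 * k) := by
  rcases eq_or_lt_of_le hk with h2 | h3
  · rw [← h2]; norm_num
  rcases eq_or_lt_of_le (show 3 ≤ k from h3) with h3' | h4
  · rw [← h3']; norm_num
  have hk4 : 4 ≤ k := h4
  have h2k := two_pow_pos' k
  set u : ℝ := ((2:ℝ) ^ k)⁻¹ with hu
  have hu0 : 0 < u := by positivity
  have hcancel : (2:ℝ) ^ k * u = 1 := mul_inv_cancel₀ (ne_of_gt h2k)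
  have h1le : (1:ℝ) ≤ 2 ^ k := one_le_pow₀ (by norm_num)
  have hu1 : u ≤ 1 := by nlinarith [mul_le_mul_of_nonneg_left h1le hu0.le]
  have h4k : 4 * (k:ℝ) ≤ 2 ^ k := by exact_mod_cast aux_four k hk4
  have h2ku : 2 * (k:ℝ) * u ≤ 1 / 2 := by
    nlinarith [mul_le_mul_of_nonneg_right h4k hu0.le]
  set m : ℕ := k - 1 with hm
  have hmk : m + 1 = k := by omega
  have hmu : (m:ℝ) * u ≤ 1 / 2 := by
    have : (m:ℝ) ≤ 2 * (k:ℝ) := by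
      have : (m:ℝ) ≤ (k:ℝ) := by exact_mod_cast Nat.sub_le k 1
      nlinarith [Nat.cast_nonneg (α := ℝ) k]
    nlinarith
  have b1 : 1 - (2 * (k:ℝ)) * u ≤ (1 - u) ^ (2 * k) := by
    have h := one_add_mul_le_pow (a := -u) (by nlinarith) (2 * k)
    rw [show (1:ℝ) + -u = 1 - u by ring] at h
    push_cast at h
    linarith
  have hlow : (1/2 : ℝ) ≤ (1 - u) ^ (2 * k) := by linarith
  have b2 : 1 - (m:ℝ) * u ≤ (1 - u) ^ m := by
    have h := one_add_mul_le_pow (a := -u) (by nlinarith) m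
    rw [show (1:ℝ) + -u = 1 - u by ring] at h
    linarith
  have hlowm : (1/2 : ℝ) ≤ (1 - u) ^ m := by linarith
  have c : (1 + u) ^ m * (1 - u) ^ m ≤ 1 := by
    rw [← mul_pow]
    exact pow_le_one₀ (by nlinarith) (by nlinarith)
  have hup : (1 + u) ^ m ≤ 2 := by
    nlinarith [pow_pos (by linarith : (0:ℝ) < 1 + u) m,
      mul_le_mul_of_nonneg_left hlowm (pow_pos (by linarith : (0:ℝ) < 1 + u) m).le]
  have hdiv : (2:ℝ) / 2 ^ k = 2 * u := by rw [div_eq_mul_inv]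
  rw [hdiv]
  have hklt : (k:ℝ) < 2 ^ k / 2 := by
    have : (2 * (k:ℝ)) < 2 ^ k := by exact_mod_cast aux_two_mul_lt k h3
    linarith
  have h2mk : (2:ℝ) ^ k = 2 * 2 ^ m := by
    rw [← hmk, pow_succ]; ring
  calc (k:ℝ) * (2 + 2 * u) ^ m
      = (k:ℝ) * (2 ^ m * (1 + u) ^ m) := by
        rw [show (2:ℝ) + 2 * u = 2 * (1 + u) by ring, mul_pow]
    _ ≤ (k:ℝ) * (2 ^ m * 2) := by
        apply mul_le_mul_of_nonneg_left _ (Nat.cast_nonneg k)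
        exact mul_le_mul_of_nonneg_left hup (by positivity)
    _ = (k:ℝ) * 2 ^ k := by rw [h2mk]; ring
    _ < 2 ^ k / 2 * 2 ^ k := mul_lt_mul_of_pos_right hklt h2k
    _ = 2 ^ (2 * k) * (1/2 : ℝ) := by rw [two_mul, pow_add]; ring
    _ ≤ 2 ^ (2 * k) * (1 - u) ^ (2 * k) := by
        apply mul_le_mul_of_nonneg_left hlow (by positivity)
    _ = (2 - 2 * u) ^ (2 * k) := by
        rw [← mul_pow]; ring_nf

private lemma uniq_root (k : ℕ) (hk : 2 ≤ k) (z w : ℂ)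
    (hz : ‖z - 2‖ ≤ 2 / 2 ^ k) (hw : ‖w - 2‖ ≤ 2 / 2 ^ k)
    (hze : z ^ k * (2 - z) = 1) (hwe : w ^ k * (2 - w) = 1) : z = w := by
  by_contra hne
  set ε : ℝ := 2 / 2 ^ k with hε
  have h2k := two_pow_pos' k
  have hε0 : 0 < ε := by positivity
  have hεle : ε ≤ 1 / 2 := by
    rw [hε, div_le_div_iff₀ h2k (by norm_num)]
    have : (4:ℝ) ≤ 2 ^ k := by
      calc (4:ℝ) = 2 ^ 2 := by norm_num
      _ ≤ 2 ^ k := pow_le_pow_right₀ one_le_two hk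
    linarith
  -- bounds on |z|, |w|
  have habs2 : ‖(2:ℂ)‖ = 2 := by norm_num
  have hzlb : 2 - ε ≤ ‖z‖ := by
    have h := norm_add_le z (2 - z)
    have h1 : z + (2 - z) = (2:ℂ) := by ring
    have h2 : ‖2 - z‖ = ‖z - 2‖ := by
      rw [show (2:ℂ) - z = -(z - 2) by ring, norm_neg]
    rw [h1, h2, habs2] at h
    linarith
  have hwlb : 2 - ε ≤ ‖w‖ := by
    have h := norm_add_le w (2 - w)
    have h1 : w + (2 - w) = (2:ℂ) := by ring
    have h2 : ‖2 - w‖ = ‖w - 2‖ := by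
      rw [show (2:ℂ) - w = -(w - 2) by ring, norm_neg]
    rw [h1, h2, habs2] at h
    linarith
  have hzub : ‖z‖ ≤ 2 + ε := by
    have h := norm_add_le (z - 2) 2
    rw [show z - 2 + 2 = z by ring, habs2] at h
    linarith
  have hwub : ‖w‖ ≤ 2 + ε := by
    have h := norm_add_le (w - 2) 2
    rw [show w - 2 + 2 = w by ring, habs2] at h
    linarith
  set S : ℂ := ∑ i ∈ Finset.range k, z ^ i * w ^ (k - 1 - i) with hS
  have hgeom := geom_sum₂_mul z w k
  have hzero : (z - w) * ((2 - w) * S - z ^ k) = 0 := by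
    rw [hS]
    linear_combination (2 - w) * hgeom + hze - hwe
  have hzw : z - w ≠ 0 := sub_ne_zero.mpr hne
  have hzk : z ^ k = (2 - w) * S := by
    rcases mul_eq_zero.mp hzero with h | h
    · exact absurd h hzw
    · exact (sub_eq_zero.mp h).symm
  have habs_zk : ‖z‖ ^ k = ‖2 - w‖ * ‖S‖ := by
    rw [← norm_pow, hzk, norm_mul]
  have habs_w : ‖w‖ ^ k * ‖2 - w‖ = 1 := by
    have h : ‖w ^ k * (2 - w)‖ = ‖(1:ℂ)‖ := by rw [hwe]
    rwa [norm_mul, norm_pow, norm_one] at h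
  have hcomb : ‖z‖ ^ k * ‖w‖ ^ k = ‖S‖ := by
    calc ‖z‖ ^ k * ‖w‖ ^ k
        = (‖2 - w‖ * ‖S‖) * ‖w‖ ^ k := by rw [habs_zk]
      _ = (‖w‖ ^ k * ‖2 - w‖) * ‖S‖ := by ring
      _ = ‖S‖ := by rw [habs_w, one_mul]
  have hSb : ‖S‖ ≤ (k:ℝ) * (2 + ε) ^ (k - 1) := by
    calc ‖S‖ ≤ ∑ i ∈ Finset.range k, ‖z ^ i * w ^ (k - 1 - i)‖ :=
          norm_sum_le _ _
      _ ≤ ∑ _i ∈ Finset.range k, (2 + ε) ^ (k - 1) := by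
          apply Finset.sum_le_sum
          intro i hi
          rw [norm_mul, norm_pow, norm_pow]
          have h1 : ‖z‖ ^ i ≤ (2 + ε) ^ i :=
            pow_le_pow_left₀ (norm_nonneg z) hzub i
          have h2 : ‖w‖ ^ (k - 1 - i) ≤ (2 + ε) ^ (k - 1 - i) :=
            pow_le_pow_left₀ (norm_nonneg w) hwub _
          have hexp : i + (k - 1 - i) = k - 1 := by
            have := Finset.mem_range.mp hi; omega
          calc ‖z‖ ^ i * ‖w‖ ^ (k - 1 - i)
              ≤ (2 + ε) ^ i * (2 + ε) ^ (k - 1 - i) := by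
                apply mul_le_mul h1 h2 (by positivity) (by positivity)
            _ = (2 + ε) ^ (k - 1) := by rw [← pow_add, hexp]
      _ = (k:ℝ) * (2 + ε) ^ (k - 1) := by
          rw [Finset.sum_const, Finset.card_range, nsmul_eq_mul]
  have hlb : (2 - ε) ^ (2 * k) ≤ ‖z‖ ^ k * ‖w‖ ^ k := by
    have hz' : (2 - ε) ^ k ≤ ‖z‖ ^ k := pow_le_pow_left₀ (by linarith) hzlb k
    have hw' : (2 - ε) ^ k ≤ ‖w‖ ^ k := pow_le_pow_left₀ (by linarith) hwlb k
    calc (2 - ε) ^ (2 * k) = (2 - ε) ^ k * (2 - ε) ^ k := by rw [two_mul, pow_add]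
      _ ≤ ‖z‖ ^ k * ‖w‖ ^ k := by
          apply mul_le_mul hz' hw' (pow_nonneg (by linarith) k) (by positivity)
  have hkey := key_ineq k hk
  rw [← hε] at hkey
  rw [hcomb] at hlb
  linarith

open Polynomial in
/-- For every integer `k ≥ 2`, the function `z ↦ z - 2 + z⁻ᵏ` has exactly one
zero (with multiplicity) in the closed disk `{z : |z - 2| ≤ 2^(1-k)}`;
equivalently (since `z ≠ 0` on that disk), the polynomial `z^(k+1) - 2 z^k + 1`
has exactly one root (with multiplicity) in that disk. -/
theorem stmt_8 (k : ℕ) (hk : 2 ≤ k) :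
    (((X ^ (k + 1) - C 2 * X ^ k + 1 : ℂ[X]).roots).filter
      (fun z => ‖z - 2‖ ≤ (2 : ℝ) ^ ((1 : ℤ) - (k : ℤ)))).card = 1 := by
  have h2k := two_pow_pos' k
  set R : ℝ := (2:ℝ) ^ ((1:ℤ) - (k:ℤ)) with hR
  have hRe : R = 2 / 2 ^ k := by
    rw [hR, zpow_sub₀ (by norm_num : (2:ℝ) ≠ 0), zpow_one, zpow_natCast]
  set p : ℂ[X] := X ^ (k + 1) - C 2 * X ^ k + 1 with hp
  have hp0 : p ≠ 0 := by
    intro h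
    have he : eval 0 p = 1 := by
      simp [hp, zero_pow (by omega : k + 1 ≠ 0), zero_pow (by omega : k ≠ 0)]
    rw [h] at he
    simp at he
  have hroot_iff : ∀ z : ℂ, p.IsRoot z ↔ z ^ k * (2 - z) = 1 := by
    intro z
    simp only [hp, IsRoot.def, eval_add, eval_sub, eval_mul, eval_pow, eval_X, eval_C, eval_one]
    constructor <;> intro h <;> linear_combination -h
  obtain ⟨r, hrIcc, hr0⟩ : ∃ r ∈ Set.Icc (2 - 2/2^k : ℝ) 2,
      (fun x : ℝ => x ^ (k+1) - 2 * x ^ k + 1) r = 0 := by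
    have hcont : ContinuousOn (fun x : ℝ => x ^ (k+1) - 2 * x ^ k + 1)
        (Set.Icc (2 - 2/2^k) 2) := by fun_prop
    have hab : (2 - 2/2^k : ℝ) ≤ 2 := by
      have : (0:ℝ) < 2 / 2 ^ k := by positivity
      linarith
    have hmem : (0:ℝ) ∈ Set.Icc ((fun x : ℝ => x ^ (k+1) - 2 * x ^ k + 1) (2 - 2/2^k))
        ((fun x : ℝ => x ^ (k+1) - 2 * x ^ k + 1) 2) := by
      constructor
      · show (2 - 2/2^k : ℝ) ^ (k+1) - 2 * (2 - 2/2^k) ^ k + 1 ≤ 0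
        have h := exist_ineq k hk
        have hid : (2 - 2/2^k : ℝ) ^ (k+1) - 2 * (2 - 2/2^k) ^ k + 1
            = 1 - (2 - 2/2^k) ^ k * (2/2^k) := by ring
        rw [hid]; linarith
      · show (0:ℝ) ≤ (2:ℝ) ^ (k+1) - 2 * 2 ^ k + 1
        have hid : (2:ℝ) ^ (k+1) - 2 * 2 ^ k + 1 = 1 := by ring
        rw [hid]; norm_num
    exact intermediate_value_Icc hab hcont hmem
  simp only [] at hr0
  have hre : r ^ k * (2 - r) = 1 := by linear_combination -hr0
  have hrC : p.IsRoot (r:ℂ) := by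
    rw [hroot_iff]
    have h := congrArg (fun x : ℝ => (x : ℂ)) hre
    push_cast at h
    exact h
  have hrpred : ‖(r:ℂ) - 2‖ ≤ R := by
    rw [hRe]
    have hcast : ((r:ℂ) - 2) = ((r - 2 : ℝ) : ℂ) := by push_cast; ring
    rw [hcast, Complex.norm_real, Real.norm_eq_abs]
    have hpos : (0:ℝ) < 2 / 2 ^ k := by positivity
    exact abs_le.mpr ⟨by linarith [hrIcc.1], by linarith [hrIcc.2]⟩
  have hrmem : (r:ℂ) ∈ p.roots.filter (fun z => ‖z - 2‖ ≤ R) :=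
    Multiset.mem_filter.mpr ⟨mem_roots'.mpr ⟨hp0, hrC⟩, hrpred⟩
  apply le_antisymm
  · by_contra hgt
    push_neg at hgt
    set t := p.roots.filter (fun z => ‖z - 2‖ ≤ R) with ht
    obtain ⟨z, hzt⟩ := Multiset.card_pos_iff_exists_mem.mp (show 0 < t.card by omega)
    obtain ⟨t', htt⟩ := Multiset.exists_cons_of_mem hzt
    have hcard : t.card = t'.card + 1 := by rw [htt]; simp
    obtain ⟨w, hwt'⟩ := Multiset.card_pos_iff_exists_mem.mp (show 0 < t'.card by omega)
    have hwt : w ∈ t := by rw [htt]; exact Multiset.mem_cons_of_mem hwt'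
    have hz' := Multiset.mem_filter.mp hzt
    have hw' := Multiset.mem_filter.mp hwt
    have hzroot : z ^ k * (2 - z) = 1 := (hroot_iff z).mp (mem_roots'.mp hz'.1).2
    have hwroot : w ^ k * (2 - w) = 1 := (hroot_iff w).mp (mem_roots'.mp hw'.1).2
    have hzpred : ‖z - 2‖ ≤ 2 / 2 ^ k := hRe ▸ hz'.2
    have hwpred : ‖w - 2‖ ≤ 2 / 2 ^ k := hRe ▸ hw'.2
    have hzw : z = w := uniq_root k hk z w hzpred hwpred hzroot hwroot
    rw [← hzw] at hwt'
    have hcount : 2 ≤ t.count z := by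
      rw [htt, Multiset.count_cons_self]
      have h1 := Multiset.one_le_count_iff_mem.mpr hwt'
      omega
    have hcount2 : 2 ≤ p.roots.count z :=
      le_trans hcount (Multiset.count_le_of_le z (Multiset.filter_le _ _))
    rw [count_roots] at hcount2
    have hdroot : p.derivative.IsRoot z := by
      by_contra hnd
      have h0 := Polynomial.rootMultiplicity_eq_zero hnd
      have h1 := Polynomial.derivative_rootMultiplicity_of_root (mem_roots'.mp hz'.1).2
      omega
    have hdz : ((k:ℂ) + 1) * z ^ k - 2 * ((k:ℂ) * z ^ (k-1)) = 0 := by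
      have h := hdroot
      simp only [hp, derivative_add, derivative_sub, derivative_one, derivative_C_mul,
        derivative_X_pow, IsRoot.def, eval_add, eval_sub, eval_mul, eval_pow, eval_X,
        eval_C, eval_zero, eval_natCast, Nat.add_sub_cancel] at h
      push_cast at h
      linear_combination h
    have hz0 : z ≠ 0 := by
      intro h
      rw [h] at hzroot
      simp [zero_pow (by omega : k ≠ 0)] at hzroot
    have hk1 : ((k:ℂ) + 1) ≠ 0 := by
      have hcast : ((k:ℂ) + 1) = ((k+1 : ℕ) : ℂ) := by push_cast; ring
      rw [hcast]
      exact Nat.cast_ne_zero.mpr (by omega)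
    have hzm1 : z ^ (k-1) ≠ 0 := pow_ne_zero _ hz0
    have hzk_eq : z ^ k = z ^ (k-1) * z := by
      rw [← pow_succ]; congr 1; omega
    have hlin : ((k:ℂ) + 1) * z = 2 * k := by
      have hfac : z ^ (k-1) * (((k:ℂ) + 1) * z - 2 * k) = 0 := by
        linear_combination hdz - ((k:ℂ) + 1) * hzk_eq
      rcases mul_eq_zero.mp hfac with h | h
      · exact absurd h hzm1
      · exact sub_eq_zero.mp h
    have hzval : z = 2 * (k:ℂ) / ((k:ℂ) + 1) := by
      field_simp
      linear_combination hlin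
    have habseq : ‖z - 2‖ = 2 / ((k:ℝ) + 1) := by
      rw [hzval]
      have hid : (2 * (k:ℂ) / ((k:ℂ) + 1)) - 2 = -(2 / ((k:ℂ) + 1)) := by
        field_simp
        ring
      rw [hid, norm_neg, norm_div]
      have h1 : ‖(2:ℂ)‖ = 2 := by norm_num
      have h2 : ‖(k:ℂ) + 1‖ = (k:ℝ) + 1 := by
        rw [show ((k:ℂ) + 1) = ((k+1 : ℕ) : ℂ) by push_cast; ring, Complex.norm_natCast]
        push_cast; ring
      rw [h1, h2]
    have hlt : R < 2 / ((k:ℝ) + 1) := by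
      rw [hRe, div_lt_div_iff₀ h2k (by positivity)]
      have hcast : ((k:ℝ) + 1) < 2 ^ k := by exact_mod_cast aux_succ_lt k hk
      linarith
    have hfin := hz'.2
    rw [habseq] at hfin
    linarith
  · exact Multiset.card_pos_iff_exists_mem.mpr ⟨_, hrmem⟩
end

section
/- Let k ≥ 2 be an integer and let α be a real number with 2 − 2^{1−k} ≤ α < 2 satisfying α − 2 + α^{−k} = 0. Then for every integer n ≥ 8, F_k(n) > (1/5)·α^n. -/
lemma F_rec (k j : ℕ) : F k (j+2) = ∑ i ∈ Finset.range k, F k (j + 1 - i) := by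
  rw [F]

lemma F_pow2 (k : ℕ) : ∀ m, m + 2 ≤ k + 1 → F k (m + 2) = 2 ^ m := by
  intro m
  induction m with
  | zero =>
    intro h
    obtain ⟨K, rfl⟩ : ∃ K, k = K + 1 := ⟨k - 1, by omega⟩
    rw [F_rec, Finset.sum_range_succ']
    have : ∀ i ∈ Finset.range K, F (K+1) (0 + 1 - (i+1)) = 0 := by
      intro i _
      simp [F]
    rw [Finset.sum_congr rfl this]
    simp [F]
  | succ m ih =>
    intro h
    obtain ⟨K, rfl⟩ : ∃ K, k = K + 1 := ⟨k - 1, by omega⟩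
    rw [F_rec, Finset.sum_range_succ']
    have e1 : ∀ i ∈ Finset.range K, F (K+1) (m + 1 + 1 - (i+1)) = F (K+1) (m + 1 - i) := by
      intro i _; congr 1; omega
    rw [Finset.sum_congr rfl e1]
    have e2 : F (K+1) (m+2) = (∑ i ∈ Finset.range K, F (K+1) (m + 1 - i)) + F (K+1) (m + 1 - K) := by
      rw [F_rec, Finset.sum_range_succ]
    have e3 : F (K+1) (m + 1 - K) = 0 := by
      have : m + 1 - K = 0 := by omega
      rw [this, F]
    have ihv := ih (by omega)
    have e4 : (∑ i ∈ Finset.range K, F (K+1) (m + 1 - i)) = 2 ^ m := by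
      rw [e2, e3] at ihv; omega
    rw [e4]
    have e5 : F (K+1) (m + 1 + 1 - 0) = 2 ^ m := by simpa using ih (by omega)
    rw [e5]; ring

lemma F_key (k : ℕ) (hk : 2 ≤ k) (α : ℝ) (hα0 : 0 < α) (hα2 : α ≤ 2)
    (hgeom : (∑ i ∈ Finset.range k, α ^ i) = α ^ k) :
    ∀ n, 2 ≤ n → α ^ n ≤ α ^ 2 * (F k n : ℝ) := by
  intro n
  induction n using Nat.strong_induction_on with
  | _ n ih =>
    intro hn
    obtain ⟨m, rfl⟩ : ∃ m, n = m + 2 := ⟨n - 2, by omega⟩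
    by_cases hcase : m + 2 ≤ k + 1
    · rw [F_pow2 k m hcase]
      push_cast
      have h1 : α ^ (m+2) = α ^ 2 * α ^ m := by ring
      rw [h1]
      gcongr

    · have hkm : k ≤ m := by omega
      rw [F_rec]
      push_cast
      have hterm : ∀ i ∈ Finset.range k, α ^ (m + 1 - i) ≤ α ^ 2 * (F k (m+1-i) : ℝ) := by
        intro i hi
        simp only [Finset.mem_range] at hi
        exact ih (m+1-i) (by omega) (by omega)
      have hsum : (∑ i ∈ Finset.range k, α ^ (m + 1 - i)) ≤
          α ^ 2 * ∑ i ∈ Finset.range k, (F k (m+1-i) : ℝ) := by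
        rw [Finset.mul_sum]
        exact Finset.sum_le_sum hterm
      have hexp : (∑ i ∈ Finset.range k, α ^ (m + 1 - i)) = α ^ (m+2) := by
        have e1 : ∀ i ∈ Finset.range k, α ^ (m + 1 - i) = α ^ (m + 1 - k) * α ^ (k - i) := by
          intro i hi
          simp only [Finset.mem_range] at hi
          rw [← pow_add]
          congr 1; omega
        rw [Finset.sum_congr rfl e1, ← Finset.mul_sum]
        have hrefl : (∑ i ∈ Finset.range k, α ^ (k - i)) = ∑ i ∈ Finset.range k, α ^ (i+1) := by
          rw [← Finset.sum_range_reflect]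
          apply Finset.sum_congr rfl
          intro i hi
          simp only [Finset.mem_range] at hi
          congr 1; omega
        have e2 : (∑ i ∈ Finset.range k, α ^ (i+1)) = α * ∑ i ∈ Finset.range k, α ^ i := by
          rw [Finset.mul_sum]; exact Finset.sum_congr rfl fun i _ => by ring
        rw [hrefl, e2, hgeom, ← pow_succ', ← pow_add]
        congr 1; omega
      linarith


/-- Lemma 3.4: if `k ≥ 2` and `α` is a real number with `2 - 2^(1-k) ≤ α < 2`
and `α - 2 + α⁻ᵏ = 0`, then `F k n > (1/5) α^n` for every integer `n ≥ 8`. -/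
theorem stmt_10 (k : ℕ) (hk : 2 ≤ k) (α : ℝ)
    (hα1 : 2 - (2 : ℝ) ^ ((1 : ℤ) - (k : ℤ)) ≤ α) (hα2 : α < 2)
    (hroot : α - 2 + α ^ (-(k : ℤ)) = 0)
    (n : ℕ) (hn : 8 ≤ n) :
    (F k n : ℝ) > (1 / 5) * α ^ n := by
  have hsmall : (2 : ℝ) ^ ((1 : ℤ) - (k : ℤ)) ≤ 1/2 := by
    calc (2:ℝ) ^ ((1:ℤ) - k) ≤ (2:ℝ) ^ (-1:ℤ) := by
          apply zpow_le_zpow_right₀ (by norm_num) (by omega)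
      _ = 1/2 := by norm_num
  have hα32 : (3/2 : ℝ) ≤ α := by linarith
  have hαpos : 0 < α := by linarith
  have hαne1 : α ≠ 1 := by intro h; rw [h] at hα32; norm_num at hα32
  have hroot' : (α ^ k)⁻¹ = 2 - α := by
    rw [← zpow_natCast α k, ← zpow_neg] ; linarith
  have hone : (1:ℝ) = (2 - α) * α ^ k := by
    rw [← hroot']
    field_simp
  have hgeom : (∑ i ∈ Finset.range k, α ^ i) = α ^ k := by
    have hm := geom_sum_mul α k
    have hne : α - 1 ≠ 0 := sub_ne_zero.mpr hαne1
    have : (∑ i ∈ Finset.range k, α ^ i) * (α - 1) = α ^ k * (α - 1) := by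
      rw [hm]; nlinarith [hone]
    exact mul_right_cancel₀ hne this
  have hkey := F_key k hk α hαpos hα2.le hgeom n (by omega)
  have hpow : (0:ℝ) < α ^ n := pow_pos hαpos n
  have hα4 : α ^ 2 < 5 := by nlinarith
  have hα2pos : (0:ℝ) < α ^ 2 := by positivity
  have hFpos : (0:ℝ) < (F k n : ℝ) := by nlinarith [hkey, hpow, hα2pos]
  nlinarith [hkey, mul_pos (show (0:ℝ) < 5 - α ^ 2 from by nlinarith) hFpos]
end
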